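/- With p : ℕ → ℝ defined by p_ℓ = h_ℓ + ∑_{i=2}^{ℓ} t_i * p_{ℓ-i}, where h_ℓ = (1/2)^{(ℓ+3)/2} for odd ℓ ≥ 3 and 0 otherwise, t_2 = 1/2, t_ℓ = (1/2)^ℓ for ℓ ≥ 3, and t_ℓ = 0 for ℓ ≤ 1: the series ∑_{ℓ=0}^∞ p_ℓ converges to 1, the series ∑_{ℓ=0}^∞ ℓ * p_ℓ converges to 13, and ∑_{ℓ=0}^∞ ℓ^2 * p_ℓ - 13^2 = 98. -/

import Mathlib

open Finset

private lemma aux_geom0 : HasSum (fun n : ℕ => ((1:ℝ)/2)^n) 2 := by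
  have := hasSum_geometric_of_lt_one (by norm_num : (0:ℝ) ≤ 1/2) (by norm_num)
  norm_num at this
  exact this

private lemma aux_geomr : HasSum (fun n : ℕ => ((10:ℝ)/19)^n) (19/9) := by
  have := hasSum_geometric_of_lt_one (by norm_num : (0:ℝ) ≤ 10/19) (by norm_num)
  rw [show ((1:ℝ) - 10/19)⁻¹ = 19/9 by norm_num] at this
  exact this

private lemma aux_geom1 : HasSum (fun n : ℕ => (n:ℝ) * (1/2)^n) 2 := by
  have := hasSum_coe_mul_geometric_of_norm_lt_one (𝕜 := ℝ) (r := 1/2)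
    (by norm_num [Real.norm_eq_abs, abs_lt])
  convert this using 1
  · rfl
  · norm_num

private lemma aux_geom2 : HasSum (fun n : ℕ => (n:ℝ)^2 * (1/2)^n) 6 := by
  have Gc := hasSum_choose_mul_geometric_of_norm_lt_one (𝕜 := ℝ) 2 (r := 1/2)
    (by norm_num [Real.norm_eq_abs, abs_lt])
  have h8 : (1:ℝ) / (1 - 1/2)^(2+1) = 8 := by norm_num
  rw [h8] at Gc
  have := (Gc.mul_left 2).sub ((aux_geom1.mul_left 3).add (aux_geom0.mul_left 2))
  convert this using 2 with n
  · rfl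
  · have hc : ((n+2).choose 2 : ℝ) = (n+1)*(n+2)/2 := by
      rw [Nat.cast_choose_two]
      push_cast
      ring
    rw [hc]
    ring
  · norm_num

/-- A GSAW on the one-sided square ladder becomes trapped with probability 1, after a mean
of 13 steps with variance 98. -/
theorem trapping_length_moments_one_sided_square (h t p : ℕ → ℝ)
    (hh : ∀ ℓ : ℕ, h ℓ = if Odd ℓ ∧ 3 ≤ ℓ then (1 / 2 : ℝ) ^ ((ℓ + 3) / 2) else 0)
    (ht0 : ∀ ℓ ≤ 1, t ℓ = 0)
    (ht2 : t 2 = 1 / 2)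
    (ht3 : ∀ ℓ : ℕ, 3 ≤ ℓ → t ℓ = (1 / 2 : ℝ) ^ ℓ)
    (hp : ∀ ℓ : ℕ, p ℓ = h ℓ + ∑ i ∈ Finset.Icc 2 ℓ, t i * p (ℓ - i)) :
    HasSum p 1 ∧
    HasSum (fun ℓ : ℕ => (ℓ : ℝ) * p ℓ) 13 ∧
    HasSum (fun ℓ : ℕ => (ℓ : ℝ) ^ 2 * p ℓ) (98 + 13 ^ 2) := by
  -- nonnegativity
  have htnn : ∀ i, 0 ≤ t i := by
    intro i
    rcases lt_or_ge i 2 with hi | hi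
    · rw [ht0 i (by omega)]
    · rcases eq_or_lt_of_le hi with hi2 | hi3
      · rw [← hi2, ht2]; norm_num
      · rw [ht3 i (by omega)]; positivity
  have hhnn : ∀ ℓ, 0 ≤ h ℓ := by
    intro ℓ
    rw [hh]
    split_ifs
    · positivity
    · exact le_refl _
  have hpnn : ∀ ℓ, 0 ≤ p ℓ := by
    intro ℓ
    induction ℓ using Nat.strong_induction_on with
    | _ ℓ ih =>
      rw [hp ℓ]
      have hs : 0 ≤ ∑ i ∈ Icc 2 ℓ, t i * p (ℓ - i) := by
        apply Finset.sum_nonneg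
        intro i hi
        have hi' := Finset.mem_Icc.1 hi
        exact mul_nonneg (htnn i) (ih (ℓ - i) (by omega))
      linarith [hhnn ℓ]
  -- shifted values of t
  have htval : ∀ n : ℕ, t (n + 3) = (1/2:ℝ)^n * (1/8) := by
    intro n
    rw [ht3 (n+3) (by omega), pow_add]
    norm_num
  have hrange3 : ∀ f : ℕ → ℝ, f 0 = 0 → (∑ i ∈ range 3, f i) = f 1 + f 2 := by
    intro f hf0
    rw [Finset.sum_range_succ, Finset.sum_range_succ, Finset.sum_range_one, hf0]
    ring
  -- sums of t-series
  have Bt : HasSum t (3/4) := by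
    have H := aux_geom0.mul_right (1/8)
    rw [show (2:ℝ) * (1/8) = 1/4 by norm_num] at H
    have hfun : (fun n : ℕ => t (n+3)) = (fun n : ℕ => ((1:ℝ)/2)^n * (1/8)) :=
      funext fun n => htval n
    have Hs : HasSum (fun n : ℕ => t (n+3)) (1/4:ℝ) := by rw [hfun]; exact H
    have H2 := (hasSum_nat_add_iff (f := t) 3).1 Hs
    have hsv : (1/4:ℝ) + ∑ i ∈ range 3, t i = 3/4 := by
      rw [hrange3 t (ht0 0 (by omega)), ht0 1 (by omega), ht2]; norm_num
    rwa [hsv] at H2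
  have Ct : HasSum (fun i : ℕ => (i:ℝ) * t i) 2 := by
    have H := (aux_geom1.mul_left (1/8)).add (aux_geom0.mul_left (3/8))
    rw [show (1/8:ℝ)*2 + (3/8:ℝ)*2 = 1 by norm_num] at H
    have hfun : (fun n : ℕ => ((n+3:ℕ):ℝ) * t (n+3))
        = (fun n : ℕ => 1/8 * ((n:ℝ) * (1/2)^n) + 3/8 * ((1:ℝ)/2)^n) := by
      funext n
      rw [htval n]
      push_cast
      ring
    have Hs : HasSum (fun n : ℕ => ((n+3:ℕ):ℝ) * t (n+3)) 1 := by rw [hfun]; exact H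
    have H2 := (hasSum_nat_add_iff (f := fun i : ℕ => (i:ℝ) * t i) 3).1 Hs
    have hsv : (1:ℝ) + ∑ i ∈ range 3, (i:ℝ) * t i = 2 := by
      rw [hrange3 _ (by norm_num), ht0 1 (by omega), ht2]; norm_num
    rwa [hsv] at H2
  have Dt : HasSum (fun i : ℕ => (i:ℝ)^2 * t i) (13/2) := by
    have H := (aux_geom2.mul_left (1/8)).add ((aux_geom1.mul_left (6/8)).add
      (aux_geom0.mul_left (9/8)))
    rw [show (1/8:ℝ)*6 + ((6/8:ℝ)*2 + (9/8:ℝ)*2) = 9/2 by norm_num] at H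
    have hfun : (fun n : ℕ => ((n+3:ℕ):ℝ)^2 * t (n+3))
        = (fun n : ℕ => 1/8 * ((n:ℝ)^2 * (1/2)^n)
            + (6/8 * ((n:ℝ) * (1/2)^n) + 9/8 * ((1:ℝ)/2)^n)) := by
      funext n
      rw [htval n]
      push_cast
      ring
    have Hs : HasSum (fun n : ℕ => ((n+3:ℕ):ℝ)^2 * t (n+3)) (9/2) := by rw [hfun]; exact H
    have H2 := (hasSum_nat_add_iff (f := fun i : ℕ => (i:ℝ)^2 * t i) 3).1 Hs
    have hsv : (9/2:ℝ) + ∑ i ∈ range 3, (i:ℝ)^2 * t i = 13/2 := by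
      rw [hrange3 _ (by norm_num), ht0 1 (by omega), ht2]; norm_num
    rwa [hsv] at H2
  have At : HasSum (fun i : ℕ => t i * (20/19:ℝ)^i) (2800/3249) := by
    have H := aux_geomr.mul_left (1000/6859)
    rw [show (1000/6859:ℝ) * (19/9) = 1000/3249 by norm_num] at H
    have hfun : (fun n : ℕ => t (n+3) * (20/19:ℝ)^(n+3))
        = (fun n : ℕ => (1000/6859:ℝ) * ((10:ℝ)/19)^n) := by
      funext n
      rw [htval n, pow_add]
      have e : ((10:ℝ)/19)^n = ((1:ℝ)/2)^n * (20/19:ℝ)^n := by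
        rw [← mul_pow]; norm_num
      rw [e, show ((20:ℝ)/19)^3 = 8000/6859 by norm_num]
      ring
    have Hs : HasSum (fun n : ℕ => t (n+3) * (20/19:ℝ)^(n+3)) (1000/3249) := by
      rw [hfun]; exact H
    have H2 := (hasSum_nat_add_iff (f := fun i : ℕ => t i * (20/19:ℝ)^i) 3).1 Hs
    have hsv : (1000/3249:ℝ) + ∑ i ∈ range 3, t i * (20/19:ℝ)^i = 2800/3249 := by
      rw [hrange3 _ (by simp [ht0 0 (by omega)]), ht0 1 (by omega), ht2]
      norm_num
    rwa [hsv] at H2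
  -- sums of h-series
  have hginj : Function.Injective (fun k : ℕ => 2*k+3) := by
    intro a b hab
    simp only at hab
    omega
  have hzero : ∀ x ∉ Set.range (fun k : ℕ => 2*k+3), h x = 0 := by
    intro x hx
    rw [hh]
    split_ifs with hc
    · exfalso
      apply hx
      obtain ⟨m, hm⟩ := hc.1
      refine ⟨(x-3)/2, ?_⟩
      simp only
      omega
    · rfl
  have hgval : ∀ k : ℕ, h (2*k+3) = (1/2:ℝ)^k * (1/8) := by
    intro k
    rw [hh, if_pos ⟨⟨k+1, by ring⟩, by omega⟩]
    have hd : (2*k+3+3)/2 = k+3 := by omega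
    rw [hd, pow_add]
    norm_num
  have Eh : HasSum h (1/4) := by
    apply (hginj.hasSum_iff hzero).1
    have H := aux_geom0.mul_right (1/8)
    rw [show (2:ℝ) * (1/8) = 1/4 by norm_num] at H
    have hfun : (h ∘ fun k : ℕ => 2*k+3) = (fun k : ℕ => ((1:ℝ)/2)^k * (1/8)) := by
      funext k
      simp only [Function.comp_apply]
      exact hgval k
    rw [hfun]; exact H
  have Fh : HasSum (fun ℓ : ℕ => (ℓ:ℝ) * h ℓ) (5/4) := by
    apply (hginj.hasSum_iff (fun x hx => by rw [hzero x hx, mul_zero])).1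
    have H := (aux_geom1.mul_left (2/8)).add (aux_geom0.mul_left (3/8))
    rw [show (2/8:ℝ)*2 + (3/8:ℝ)*2 = 5/4 by norm_num] at H
    have hfun : ((fun ℓ : ℕ => (ℓ:ℝ) * h ℓ) ∘ fun k : ℕ => 2*k+3)
        = (fun k : ℕ => 2/8 * ((k:ℝ) * (1/2)^k) + 3/8 * ((1:ℝ)/2)^k) := by
      funext k
      simp only [Function.comp_apply]
      rw [hgval k]
      push_cast
      ring
    rw [hfun]; exact H
  have Gh : HasSum (fun ℓ : ℕ => (ℓ:ℝ)^2 * h ℓ) (33/4) := by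
    apply (hginj.hasSum_iff (fun x hx => by rw [hzero x hx, mul_zero])).1
    have H := (aux_geom2.mul_left (4/8)).add ((aux_geom1.mul_left (12/8)).add
      (aux_geom0.mul_left (9/8)))
    rw [show (4/8:ℝ)*6 + ((12/8:ℝ)*2 + (9/8:ℝ)*2) = 33/4 by norm_num] at H
    have hfun : ((fun ℓ : ℕ => (ℓ:ℝ)^2 * h ℓ) ∘ fun k : ℕ => 2*k+3)
        = (fun k : ℕ => 4/8 * ((k:ℝ)^2 * (1/2)^k)
            + (12/8 * ((k:ℝ) * (1/2)^k) + 9/8 * ((1:ℝ)/2)^k)) := by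
      funext k
      simp only [Function.comp_apply]
      rw [hgval k]
      push_cast
      ring
    rw [hfun]; exact H
  -- pointwise bound on h
  have hb : ∀ ℓ : ℕ, h ℓ ≤ (1/2) * (19/20:ℝ)^ℓ := by
    intro ℓ
    rw [hh]
    split_ifs with hc
    · obtain ⟨⟨m, hm⟩, h3⟩ := hc
      obtain ⟨k, rfl⟩ : ∃ k, ℓ = 2*k+3 := ⟨(ℓ-3)/2, by omega⟩
      have hd : (2*k+3+3)/2 = k+3 := by omega
      rw [hd]
      have e1 : (1/2:ℝ)^k ≤ (361/400:ℝ)^k := by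
        apply pow_le_pow_left₀ (by norm_num) (by norm_num)
      have e2 : (19/20:ℝ)^(2*k+3) = (361/400:ℝ)^k * (6859/8000) := by
        rw [pow_add, pow_mul]
        norm_num
      have e3 : (1/2:ℝ)^(k+3) = (1/2:ℝ)^k * (1/8) := by
        rw [pow_add]; norm_num
      rw [e2, e3]
      nlinarith [pow_nonneg (by norm_num : (0:ℝ) ≤ 1/2) k]
    · positivity
  -- finite partial-sum bound
  have Fsum : ∀ ℓ : ℕ, ∑ i ∈ Icc 2 ℓ, t i * (20/19:ℝ)^i ≤ 2800/3249 := by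
    intro ℓ
    have := Summable.sum_le_tsum (Icc 2 ℓ)
      (fun i _ => mul_nonneg (htnn i) (by positivity)) At.summable
    rwa [At.tsum_eq] at this
  -- geometric bound on p
  have key : ∀ ℓ : ℕ, p ℓ ≤ 4 * (19/20:ℝ)^ℓ := by
    intro ℓ
    induction ℓ using Nat.strong_induction_on with
    | _ ℓ ih =>
      rw [hp ℓ]
      have hsum : ∑ i ∈ Icc 2 ℓ, t i * p (ℓ-i)
          ≤ ∑ i ∈ Icc 2 ℓ, 4*(19/20:ℝ)^ℓ * (t i * (20/19:ℝ)^i) := by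
        apply Finset.sum_le_sum
        intro i hi
        have hi' := Finset.mem_Icc.1 hi
        have step : t i * p (ℓ-i) ≤ t i * (4 * (19/20:ℝ)^(ℓ-i)) :=
          mul_le_mul_of_nonneg_left (ih _ (by omega)) (htnn i)
        have hps : (19/20:ℝ)^(ℓ-i) * (19/20:ℝ)^i = (19/20:ℝ)^ℓ := by
          rw [← pow_add]
          congr 1
          omega
        have h1 : (20/19:ℝ)^i * (19/20:ℝ)^i = 1 := by
          rw [← mul_pow]; norm_num
        have h2 : (19/20:ℝ)^(ℓ-i) = (19/20:ℝ)^ℓ * (20/19:ℝ)^i := by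
          rw [← hps, mul_assoc, mul_comm ((19/20:ℝ)^i), h1, mul_one]
        calc t i * p (ℓ-i) ≤ t i * (4 * (19/20:ℝ)^(ℓ-i)) := step
          _ = 4*(19/20:ℝ)^ℓ * (t i * (20/19:ℝ)^i) := by rw [h2]; ring
      rw [← Finset.mul_sum] at hsum
      have h4 : (4:ℝ)*(19/20:ℝ)^ℓ * (∑ i ∈ Icc 2 ℓ, t i * (20/19:ℝ)^i)
          ≤ 4*(19/20:ℝ)^ℓ * (2800/3249) :=
        mul_le_mul_of_nonneg_left (Fsum ℓ) (by positivity)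
      have hq : (0:ℝ) ≤ (19/20:ℝ)^ℓ := by positivity
      have hbl := hb ℓ
      linarith
  -- summability
  have Sq : ∀ k : ℕ, Summable (fun ℓ : ℕ => (ℓ:ℝ)^k * (19/20:ℝ)^ℓ) := fun k =>
    summable_pow_mul_geometric_of_norm_lt_one k (by norm_num [Real.norm_eq_abs, abs_lt])
  have Sp : Summable p := by
    apply Summable.of_nonneg_of_le hpnn key
    exact ((Sq 0).mul_left 4).congr (fun n => by ring)
  have Sp1 : Summable (fun ℓ : ℕ => (ℓ:ℝ) * p ℓ) :=
    Summable.of_nonneg_of_le (fun n => mul_nonneg (Nat.cast_nonneg n) (hpnn n))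
      (fun n => by
        calc (n:ℝ) * p n ≤ (n:ℝ) * (4 * (19/20:ℝ)^n) :=
              mul_le_mul_of_nonneg_left (key n) (Nat.cast_nonneg n)
          _ = 4 * ((n:ℝ)^1 * (19/20:ℝ)^n) := by ring)
      ((Sq 1).mul_left 4)
  have Sp2 : Summable (fun ℓ : ℕ => (ℓ:ℝ)^2 * p ℓ) :=
    Summable.of_nonneg_of_le (fun n => mul_nonneg (by positivity) (hpnn n))
      (fun n => by
        calc (n:ℝ)^2 * p n ≤ (n:ℝ)^2 * (4 * (19/20:ℝ)^n) :=
              mul_le_mul_of_nonneg_left (key n) (by positivity)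
          _ = 4 * ((n:ℝ)^2 * (19/20:ℝ)^n) := by ring)
      ((Sq 2).mul_left 4)
  -- norm summabilities
  have normize : ∀ (f : ℕ → ℝ), (∀ n, 0 ≤ f n) → Summable f
      → Summable (fun n => ‖f n‖) := by
    intro f hf hs
    apply hs.congr
    intro n
    rw [Real.norm_eq_abs, abs_of_nonneg (hf n)]
  have np : Summable (fun n => ‖p n‖) := normize p hpnn Sp
  have np1 : Summable (fun n : ℕ => ‖(n:ℝ) * p n‖) :=
    normize _ (fun n => mul_nonneg (Nat.cast_nonneg n) (hpnn n)) Sp1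
  have np2 : Summable (fun n : ℕ => ‖(n:ℝ)^2 * p n‖) :=
    normize _ (fun n => mul_nonneg (by positivity) (hpnn n)) Sp2
  have nt : Summable (fun n => ‖t n‖) := normize t htnn Bt.summable
  have nt1 : Summable (fun n : ℕ => ‖(n:ℝ) * t n‖) :=
    normize _ (fun n => mul_nonneg (Nat.cast_nonneg n) (htnn n)) Ct.summable
  have nt2 : Summable (fun n : ℕ => ‖(n:ℝ)^2 * t n‖) :=
    normize _ (fun n => mul_nonneg (by positivity) (htnn n)) Dt.summable
  have nt1' : Summable (fun n : ℕ => ‖2 * ((n:ℝ) * t n)‖) :=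
    normize _ (fun n => mul_nonneg (by norm_num) (mul_nonneg (Nat.cast_nonneg n) (htnn n)))
      (Ct.summable.mul_left 2)
  -- recurrence over range
  have hp' : ∀ ℓ : ℕ, p ℓ = h ℓ + ∑ k ∈ range (ℓ+1), t k * p (ℓ-k) := by
    intro ℓ
    rw [hp ℓ]
    congr 1
    apply Finset.sum_subset
    · intro i hi
      simp only [Finset.mem_Icc] at hi
      simp only [Finset.mem_range]
      omega
    · intro i hi hni
      simp only [Finset.mem_range] at hi
      simp only [Finset.mem_Icc, not_and, not_le] at hni
      rw [ht0 i (by omega), zero_mul]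
  -- zeroth moment
  have C0 := hasSum_sum_range_mul_of_summable_norm nt np
  rw [Bt.tsum_eq] at C0
  have Sval : ∑' n, p n = 1 := by
    have e1 : ∑' n, p n = 1/4 + 3/4 * ∑' n, p n := by
      calc ∑' n, p n
          = ∑' ℓ : ℕ, (h ℓ + ∑ k ∈ range (ℓ+1), t k * p (ℓ-k)) := tsum_congr hp'
        _ = (∑' ℓ : ℕ, h ℓ) + ∑' ℓ : ℕ, ∑ k ∈ range (ℓ+1), t k * p (ℓ-k) :=
            Summable.tsum_add Eh.summable C0.summable
        _ = 1/4 + 3/4 * ∑' n, p n := by rw [Eh.tsum_eq, C0.tsum_eq]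
    linarith
  have goal1 : HasSum p 1 := by
    have := Sp.hasSum
    rwa [Sval] at this
  -- first moment
  have hp1 : ∀ ℓ : ℕ, (ℓ:ℝ) * p ℓ = (ℓ:ℝ) * h ℓ +
      (∑ k ∈ range (ℓ+1), ((k:ℝ) * t k) * p (ℓ-k)
       + ∑ k ∈ range (ℓ+1), t k * (((ℓ-k:ℕ):ℝ) * p (ℓ-k))) := by
    intro ℓ
    rw [hp' ℓ, mul_add, Finset.mul_sum, ← Finset.sum_add_distrib]
    congr 1
    apply Finset.sum_congr rfl
    intro k hk
    have hk' : k ≤ ℓ := by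
      have := Finset.mem_range.1 hk
      omega
    have hc : ((ℓ - k:ℕ):ℝ) = (ℓ:ℝ) - (k:ℝ) := by
      push_cast [Nat.cast_sub hk']
      ring
    rw [hc]
    ring
  have CA := hasSum_sum_range_mul_of_summable_norm nt1 np
  rw [Ct.tsum_eq, Sval] at CA
  have CB := hasSum_sum_range_mul_of_summable_norm nt np1
  rw [Bt.tsum_eq] at CB
  have Mval : ∑' n : ℕ, (n:ℝ) * p n = 13 := by
    have e1 : ∑' n : ℕ, (n:ℝ) * p n = 5/4 + (2 * 1 + 3/4 * ∑' n : ℕ, (n:ℝ) * p n) := by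
      calc ∑' n : ℕ, (n:ℝ) * p n
          = ∑' ℓ : ℕ, ((ℓ:ℝ) * h ℓ + (∑ k ∈ range (ℓ+1), ((k:ℝ) * t k) * p (ℓ-k)
              + ∑ k ∈ range (ℓ+1), t k * (((ℓ-k:ℕ):ℝ) * p (ℓ-k)))) := tsum_congr hp1
        _ = (∑' ℓ : ℕ, (ℓ:ℝ) * h ℓ) + ∑' ℓ : ℕ, (∑ k ∈ range (ℓ+1), ((k:ℝ) * t k) * p (ℓ-k)
              + ∑ k ∈ range (ℓ+1), t k * (((ℓ-k:ℕ):ℝ) * p (ℓ-k))) :=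
            Summable.tsum_add Fh.summable (CA.summable.add CB.summable)
        _ = 5/4 + (2 * 1 + 3/4 * ∑' n : ℕ, (n:ℝ) * p n) := by
            rw [Summable.tsum_add CA.summable CB.summable, Fh.tsum_eq, CA.tsum_eq, CB.tsum_eq]
    linarith
  have goal2 : HasSum (fun ℓ : ℕ => (ℓ:ℝ) * p ℓ) 13 := by
    have := Sp1.hasSum
    rwa [Mval] at this
  -- second moment
  have hp2 : ∀ ℓ : ℕ, (ℓ:ℝ)^2 * p ℓ = (ℓ:ℝ)^2 * h ℓ +
      (∑ k ∈ range (ℓ+1), ((k:ℝ)^2 * t k) * p (ℓ-k)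
       + (∑ k ∈ range (ℓ+1), (2 * ((k:ℝ) * t k)) * (((ℓ-k:ℕ):ℝ) * p (ℓ-k))
          + ∑ k ∈ range (ℓ+1), t k * (((ℓ-k:ℕ):ℝ)^2 * p (ℓ-k)))) := by
    intro ℓ
    rw [hp' ℓ, mul_add, Finset.mul_sum, ← Finset.sum_add_distrib, ← Finset.sum_add_distrib]
    congr 1
    apply Finset.sum_congr rfl
    intro k hk
    have hk' : k ≤ ℓ := by
      have := Finset.mem_range.1 hk
      omega
    have hc : ((ℓ - k:ℕ):ℝ) = (ℓ:ℝ) - (k:ℝ) := by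
      push_cast [Nat.cast_sub hk']
      ring
    rw [hc]
    ring
  have CC := hasSum_sum_range_mul_of_summable_norm nt2 np
  rw [Dt.tsum_eq, Sval] at CC
  have CD := hasSum_sum_range_mul_of_summable_norm nt1' np1
  have h2t : ∑' n : ℕ, 2 * ((n:ℝ) * t n) = 4 := by
    rw [tsum_mul_left, Ct.tsum_eq]
    norm_num
  rw [h2t, Mval] at CD
  have CE := hasSum_sum_range_mul_of_summable_norm nt np2
  rw [Bt.tsum_eq] at CE
  have Qval : ∑' n : ℕ, (n:ℝ)^2 * p n = 267 := by
    have e1 : ∑' n : ℕ, (n:ℝ)^2 * p n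
        = 33/4 + (13/2 * 1 + (4 * 13 + 3/4 * ∑' n : ℕ, (n:ℝ)^2 * p n)) := by
      calc ∑' n : ℕ, (n:ℝ)^2 * p n
          = ∑' ℓ : ℕ, ((ℓ:ℝ)^2 * h ℓ + (∑ k ∈ range (ℓ+1), ((k:ℝ)^2 * t k) * p (ℓ-k)
              + (∑ k ∈ range (ℓ+1), (2 * ((k:ℝ) * t k)) * (((ℓ-k:ℕ):ℝ) * p (ℓ-k))
                 + ∑ k ∈ range (ℓ+1), t k * (((ℓ-k:ℕ):ℝ)^2 * p (ℓ-k))))) := tsum_congr hp2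
        _ = (∑' ℓ : ℕ, (ℓ:ℝ)^2 * h ℓ) + ∑' ℓ : ℕ, (∑ k ∈ range (ℓ+1), ((k:ℝ)^2 * t k) * p (ℓ-k)
              + (∑ k ∈ range (ℓ+1), (2 * ((k:ℝ) * t k)) * (((ℓ-k:ℕ):ℝ) * p (ℓ-k))
                 + ∑ k ∈ range (ℓ+1), t k * (((ℓ-k:ℕ):ℝ)^2 * p (ℓ-k)))) :=
            Summable.tsum_add Gh.summable (CC.summable.add (CD.summable.add CE.summable))
        _ = 33/4 + (13/2 * 1 + (4 * 13 + 3/4 * ∑' n : ℕ, (n:ℝ)^2 * p n)) := by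
            rw [Summable.tsum_add CC.summable (CD.summable.add CE.summable),
              Summable.tsum_add CD.summable CE.summable,
              Gh.tsum_eq, CC.tsum_eq, CD.tsum_eq, CE.tsum_eq]
    linarith
  have goal3 : HasSum (fun ℓ : ℕ => (ℓ:ℝ)^2 * p ℓ) (98 + 13^2) := by
    have := Sp2.hasSum
    rw [Qval] at this
    convert this using 1
    norm_num
  exact ⟨goal1, goal2, goal3⟩
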